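/- (Euler's theorem for the q-exponential E_q) For complex z and q with |q| < 1: ∑_{k=0}^∞ q^{C(k,2)} z^k / (q;q)_k = (−z; q)_∞. -/

import Mathlib

open Filter Finset Topology

noncomputable def qD (q : ℂ) (k : ℕ) : ℂ := ∏ j ∈ Finset.range k, (1 - q * q ^ j)

noncomputable def qf (q z : ℂ) (k : ℕ) : ℂ := q ^ (k.choose 2) * z ^ k / qD q k

lemma qfac_ne {q : ℂ} (hq : ‖q‖ < 1) (j : ℕ) : 1 - q * q ^ j ≠ 0 := by
  intro h
  have h1 : q * q ^ j = 1 := by linear_combination -h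
  have h2 : ‖q‖ ^ (j + 1) = 1 := by
    rw [pow_succ']
    rw [← norm_pow, ← norm_mul, h1, norm_one]
  have h3 : ‖q‖ ^ (j + 1) ≤ ‖q‖ ^ 1 :=
    pow_le_pow_of_le_one (norm_nonneg q) hq.le (Nat.le_add_left 1 j)
  simp only [pow_one] at h3
  linarith

lemma qD_ne {q : ℂ} (hq : ‖q‖ < 1) (k : ℕ) : qD q k ≠ 0 :=
  Finset.prod_ne_zero_iff.mpr fun j _ => qfac_ne hq j

lemma choose_succ (k : ℕ) : (k + 1).choose 2 = k.choose 2 + k := by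
  rw [Nat.choose_succ_succ]
  simp [Nat.choose_one_right, Nat.add_comm]

lemma qf_zero (q z : ℂ) : qf q z 0 = 1 := by simp [qf, qD]

lemma qf_succ {q : ℂ} (hq : ‖q‖ < 1) (z : ℂ) (k : ℕ) :
    qf q z (k + 1) = qf q z k * (q ^ k * z / (1 - q * q ^ k)) := by
  have hD := qD_ne hq k
  have hf := qfac_ne hq k
  simp only [qD] at hD
  simp only [qf, qD, Finset.prod_range_succ, choose_succ, pow_add, pow_succ]
  field_simp

lemma qf_summable_norm {q : ℂ} (hq : ‖q‖ < 1) (z : ℂ) :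
    Summable (fun k => ‖qf q z k‖) := by
  have h0 : (0:ℝ) < 1 - ‖q‖ := by linarith
  apply summable_of_ratio_norm_eventually_le (r := 1/2) (by norm_num)
  have ht : Tendsto (fun k => ‖q‖ ^ k * ‖z‖) atTop (𝓝 0) := by
    simpa using (tendsto_pow_atTop_nhds_zero_of_lt_one (norm_nonneg q) hq).mul_const
      (‖z‖)
  filter_upwards [ht.eventually_lt_const (by linarith : (0:ℝ) < (1 - ‖q‖)/2)] with k hk
  rw [norm_norm, norm_norm, qf_succ hq z k, norm_mul]
  have hden : 1 - ‖q‖ ≤ ‖(1 - q * q ^ k)‖ := by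
    have := norm_sub_norm_le (1 : ℂ) (q * q ^ k)
    have h2 : ‖(q * q ^ k)‖ ≤ ‖q‖ := by
      rw [norm_mul, norm_pow]
      calc ‖q‖ * ‖q‖ ^ k ≤ ‖q‖ * 1 := by
            apply mul_le_mul_of_nonneg_left _ (norm_nonneg q)
            exact pow_le_one₀ (norm_nonneg q) hq.le
        _ = ‖q‖ := mul_one _
    simp only [norm_one] at this
    linarith
  have hmul : ‖q ^ k * z / (1 - q * q ^ k)‖ ≤ 1/2 := by
    rw [norm_div, norm_mul, norm_pow]
    rw [div_le_iff₀ (by linarith)]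
    calc ‖q‖ ^ k * ‖z‖ ≤ (1 - ‖q‖)/2 := hk.le
      _ ≤ 1/2 * ‖(1 - q * q ^ k)‖ := by linarith
  calc ‖qf q z k‖ * ‖q ^ k * z / (1 - q * q ^ k)‖ ≤ ‖qf q z k‖ * (1/2) :=
        mul_le_mul_of_nonneg_left hmul (norm_nonneg _)
    _ = 1/2 * ‖qf q z k‖ := mul_comm _ _

lemma qf_summable {q : ℂ} (hq : ‖q‖ < 1) (z : ℂ) : Summable (qf q z) :=
  (qf_summable_norm hq z).of_norm

lemma qf_step {q : ℂ} (hq : ‖q‖ < 1) (w : ℂ) (k : ℕ) :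
    qf q w (k + 1) = qf q (q * w) (k + 1) + w * qf q (q * w) k := by
  have hD := qD_ne hq k
  have hf := qfac_ne hq k
  simp only [qD] at hD
  simp only [qf, qD, Finset.prod_range_succ, choose_succ, pow_add, pow_succ, mul_pow]
  field_simp
  linear_combination (q ^ k.choose 2 * q ^ k * w * w ^ k) * mul_inv_cancel₀ hf

lemma qf_feq {q : ℂ} (hq : ‖q‖ < 1) (w : ℂ) :
    (∑' k, qf q w k) = (1 + w) * ∑' k, qf q (q * w) k := by
  have hs : Summable (qf q (q * w)) := qf_summable hq (q * w)
  have hs1 : Summable (fun k => qf q (q * w) (k + 1)) := (summable_nat_add_iff 1).mpr hs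
  have hs2 : Summable (fun k => w * qf q (q * w) k) := hs.mul_left w
  calc (∑' k, qf q w k) = qf q w 0 + ∑' k, qf q w (k + 1) := (qf_summable hq w).tsum_eq_zero_add
    _ = qf q (q * w) 0 + ∑' k, (qf q (q * w) (k + 1) + w * qf q (q * w) k) := by
        rw [qf_zero, qf_zero]
        exact congrArg _ (tsum_congr fun k => qf_step hq w k)
    _ = qf q (q * w) 0 + ((∑' k, qf q (q * w) (k + 1)) + ∑' k, w * qf q (q * w) k) := by
        rw [hs1.tsum_add hs2]
    _ = (∑' k, qf q (q * w) k) + w * ∑' k, qf q (q * w) k := by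
        rw [tsum_mul_left, hs.tsum_eq_zero_add]; ring
    _ = (1 + w) * ∑' k, qf q (q * w) k := by ring

lemma qf_iter {q : ℂ} (hq : ‖q‖ < 1) (z : ℂ) (N : ℕ) :
    (∑' k, qf q z k) = (∏ n ∈ Finset.range N, (1 + z * q ^ n)) * ∑' k, qf q (q ^ N * z) k := by
  induction N with
  | zero => simp
  | succ n ih =>
      rw [ih, Finset.prod_range_succ, qf_feq hq (q ^ n * z)]
      have : q * (q ^ n * z) = q ^ (n + 1) * z := by ring
      rw [this]
      ring

lemma qf_smul (q c z : ℂ) (k : ℕ) : qf q (c * z) k = c ^ k * qf q z k := by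
  simp only [qf, mul_pow]
  ring

set_option maxHeartbeats 1000000 in
lemma tail_tendsto {q : ℂ} (hq : ‖q‖ < 1) (z : ℂ) :
    Tendsto (fun N => ∑' k, qf q (q ^ N * z) k) atTop (𝓝 1) := by
  set S : ℝ := ∑' k, ‖qf q z (k + 1)‖ with hS
  have hSnn : 0 ≤ S := tsum_nonneg fun k => norm_nonneg _
  have hsn : Summable (fun k => ‖qf q z (k + 1)‖) :=
    (summable_nat_add_iff 1).mpr (qf_summable_norm hq z)
  have key : ∀ N, ‖(∑' k, qf q (q ^ N * z) k) - 1‖ ≤ ‖q‖ ^ N * S := by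
    intro N
    have hsum := qf_summable hq (q ^ N * z)
    have hsn' : Summable (fun k => ‖qf q (q ^ N * z) (k + 1)‖) :=
      (summable_nat_add_iff 1).mpr (qf_summable_norm hq (q ^ N * z))
    have h1 : (∑' k, qf q (q ^ N * z) k) - 1 = ∑' k, qf q (q ^ N * z) (k + 1) := by
      rw [hsum.tsum_eq_zero_add, qf_zero]; ring
    rw [h1]
    calc ‖∑' k, qf q (q ^ N * z) (k + 1)‖ ≤ ∑' k, ‖qf q (q ^ N * z) (k + 1)‖ :=
          norm_tsum_le_tsum_norm hsn'
      _ ≤ ∑' k, ‖q‖ ^ N * ‖qf q z (k + 1)‖ := by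
          apply Summable.tsum_le_tsum _ hsn' (hsn.mul_left _)
          intro k
          rw [qf_smul q (q ^ N) z, norm_mul, norm_pow, norm_pow]
          have hle1 : ‖q‖ ^ N ≤ 1 := pow_le_one₀ (norm_nonneg q) hq.le
          have hpow : (‖q‖ ^ N) ^ (k + 1) ≤ ‖q‖ ^ N := by
            calc (‖q‖ ^ N) ^ (k + 1) ≤ (‖q‖ ^ N) ^ 1 :=
                  pow_le_pow_of_le_one (by positivity) hle1 (Nat.le_add_left 1 k)
              _ = ‖q‖ ^ N := pow_one _
          exact mul_le_mul_of_nonneg_right hpow (norm_nonneg _)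
      _ = ‖q‖ ^ N * S := tsum_mul_left
  have h0 : Tendsto (fun N : ℕ => ‖q‖ ^ N * S) atTop (𝓝 0) := by
    simpa using (tendsto_pow_atTop_nhds_zero_of_lt_one (norm_nonneg q) hq).mul_const S
  have := squeeze_zero_norm key h0
  have h2 := this.add_const 1
  simpa using h2

lemma hp_prod (z q : ℂ) (hq : ‖q‖ < 1) :
    HasProd (fun n => 1 + z * q ^ n) (∏' n, (1 + z * q ^ n)) := by
  by_cases h : ∀ n, 1 + z * q ^ n ≠ 0
  · have hlog : Summable (fun n => Complex.log (1 + z * q ^ n)) := by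
      apply Summable.of_norm_bounded_eventually
        (g := fun n => 3/2 * (‖z‖ * ‖q‖ ^ n))
      · exact (((summable_geometric_of_lt_one (norm_nonneg q) hq).mul_left
          (‖z‖)).mul_left (3/2))
      · rw [Nat.cofinite_eq_atTop]
        have ht : Tendsto (fun n => ‖z‖ * ‖q‖ ^ n) atTop (𝓝 0) := by
          simpa using (tendsto_pow_atTop_nhds_zero_of_lt_one (norm_nonneg q) hq).const_mul
            (‖z‖)
        filter_upwards [ht.eventually_lt_const (by norm_num : (0:ℝ) < 1/2)] with n hn
        have hb : ‖z * q ^ n‖ ≤ 1/2 := by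
          rw [norm_mul, norm_pow]; exact hn.le
        calc ‖Complex.log (1 + z * q ^ n)‖ ≤ 3/2 * ‖z * q ^ n‖ :=
              Complex.norm_log_one_add_half_le_self hb
          _ = 3/2 * (‖z‖ * ‖q‖ ^ n) := by
              rw [norm_mul, norm_pow]
    exact (Complex.multipliable_of_summable_log hlog).hasProd
  · push_neg at h
    obtain ⟨n₀, h0⟩ := h
    have hzero : HasProd (fun n => 1 + z * q ^ n) 0 := by
      have hev : (fun s : Finset ℕ => ∏ i ∈ s, (1 + z * q ^ i)) =ᶠ[atTop] fun _ => 0 := by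
        filter_upwards [eventually_ge_atTop ({n₀} : Finset ℕ)] with s hs
        exact Finset.prod_eq_zero (hs (Finset.mem_singleton_self n₀)) h0
      exact tendsto_const_nhds.congr' hev.symm
    rw [hzero.tprod_eq]
    exact hzero

theorem q_exponential_E (z q : ℂ) (hq : ‖q‖ < 1) :
    (∑' k : ℕ, q ^ (k.choose 2) * z ^ k / (∏ j ∈ Finset.range k, (1 - q * q ^ j))) =
      ∏' n : ℕ, (1 + z * q ^ n) := by
  have key : Tendsto (fun N => (∏ n ∈ Finset.range N, (1 + z * q ^ n)) *
      ∑' k, qf q (q ^ N * z) k) atTop (𝓝 ((∏' n, (1 + z * q ^ n)) * 1)) :=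
    ((hp_prod z q hq).tendsto_prod_nat).mul (tail_tendsto hq z)
  have hconst : (fun N => (∏ n ∈ Finset.range N, (1 + z * q ^ n)) *
      ∑' k, qf q (q ^ N * z) k) = fun _ => ∑' k, qf q z k := by
    funext N; exact (qf_iter hq z N).symm
  rw [hconst] at key
  have := tendsto_nhds_unique key tendsto_const_nhds
  rw [mul_one] at this
  simpa [qf, qD] using this.symm
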